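/- arXiv:2010.04688 — 2 statements merged into one kernel-verified Lean document; each statement's English description precedes it below -/
import Mathlib

section
/- Let n ≥ 2 be a natural number. For each i ∈ {1,…,n} let G_i : ℝ^{n−1} → ℝ be measurable with ∫_{ℝ^{n−1}} |G_i|^{n−1} < ∞, and define F_i : ℝⁿ → ℝ by F_i(x) = G_i(x₁,…,x_{i−1},x_{i+1},…,x_n), so that F_i does not depend on the i-th coordinate. Then ∫_{ℝⁿ} |F_1(x) ⋯ F_n(x)| dx ≤ ∏_{i=1}^n ( ∫_{ℝ^{n−1}} |G_i|^{n−1} dV_i )^{1/(n−1)}. -/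
open MeasureTheory ENNReal Finset
open scoped NNReal

/-- Loomis–Whitney type inequality via `lmarginal` induction. -/
theorem lw_aux {ι : Type*} [Fintype ι] [DecidableEq ι] {A : ι → Type*}
    [∀ i, MeasurableSpace (A i)] (μ : ∀ i, Measure (A i)) [∀ i, SigmaFinite (μ i)]
    {p : ℝ} (hp₀ : 0 ≤ p) (hp1 : ((Fintype.card ι : ℝ) - 1) * p = 1)
    (f : ι → (∀ i, A i) → ℝ≥0∞) (hf : ∀ i, Measurable (f i))
    (hind : ∀ i x t, f i (Function.update x i t) = f i x)
    (s : Finset ι) :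
    (∫⋯∫⁻_s, (fun x => ∏ i, f i x ^ p) ∂μ) ≤
      fun x => ∏ i, ((∫⋯∫⁻_(s.erase i), f i ∂μ) x) ^ p := by
  have hindm : ∀ (i : ι) (u : Finset ι) (x : ∀ i, A i) (t : A i),
      (∫⋯∫⁻_u, f i ∂μ) (Function.update x i t) = (∫⋯∫⁻_u, f i ∂μ) x := by
    intro i u x t
    by_cases hi : i ∈ u
    · exact lmarginal_update_of_mem μ hi _ _ _
    · rw [lmarginal_update_of_notMem (hf i) hi]
      congr 1
      exact funext fun y => hind i y t
  induction s using Finset.induction with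
  | empty => simp [le_refl]
  | @insert j s hj ih =>
    have hFmeas : Measurable fun x => ∏ i, f i x ^ p :=
      Finset.measurable_prod _ fun i _ => (hf i).pow_const _
    intro x
    rw [lmarginal_insert _ hFmeas hj]
    have hmeast : ∀ i : ι, Measurable fun t : A j =>
        (∫⋯∫⁻_(s.erase i), f i ∂μ) (Function.update x j t) :=
      fun i => ((hf i).lmarginal μ).comp (measurable_update x)
    calc ∫⁻ t, (∫⋯∫⁻_s, (fun x => ∏ i, f i x ^ p) ∂μ) (Function.update x j t) ∂μ j
        ≤ ∫⁻ t, ∏ i, ((∫⋯∫⁻_(s.erase i), f i ∂μ) (Function.update x j t)) ^ p ∂μ j :=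
          lintegral_mono fun t => ih (Function.update x j t)
      _ = ∫⁻ t, ((∫⋯∫⁻_s, f j ∂μ) x) ^ p *
            ∏ i ∈ univ.erase j,
              ((∫⋯∫⁻_(s.erase i), f i ∂μ) (Function.update x j t)) ^ p ∂μ j := by
          congr 1; funext t
          rw [← Finset.mul_prod_erase univ _ (mem_univ j), Finset.erase_eq_of_notMem hj,
            hindm j s x t]
      _ = ((∫⋯∫⁻_s, f j ∂μ) x) ^ p *
            ∫⁻ t, ∏ i ∈ univ.erase j,
              ((∫⋯∫⁻_(s.erase i), f i ∂μ) (Function.update x j t)) ^ p ∂μ j := by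
          exact lintegral_const_mul _
            (Finset.measurable_prod _ fun i _ => (hmeast i).pow_const _)
      _ ≤ ((∫⋯∫⁻_s, f j ∂μ) x) ^ p *
            ∏ i ∈ univ.erase j,
              (∫⁻ t, (∫⋯∫⁻_(s.erase i), f i ∂μ) (Function.update x j t) ∂μ j) ^ p := by
          gcongr
          refine ENNReal.lintegral_prod_norm_pow_le _ (fun i _ => (hmeast i).aemeasurable)
            ?_ (fun _ _ => hp₀)
          have hc : 1 ≤ Fintype.card ι := Fintype.card_pos_iff.mpr ⟨j⟩
          rw [Finset.sum_const, card_erase_of_mem (mem_univ j), card_univ, nsmul_eq_mul,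
            Nat.cast_sub hc, Nat.cast_one]
          exact hp1
      _ = ∏ i, ((∫⋯∫⁻_((insert j s).erase i), f i ∂μ) x) ^ p := by
          rw [← Finset.mul_prod_erase univ
            (fun i => ((∫⋯∫⁻_((insert j s).erase i), f i ∂μ) x) ^ p) (mem_univ j),
            Finset.erase_insert hj]
          congr 1
          refine Finset.prod_congr rfl fun i hi => ?_
          have hij : i ≠ j := (Finset.mem_erase.mp hi).1
          rw [Finset.erase_insert_of_ne hij.symm,
            lmarginal_insert _ (hf i) (fun h => hj (Finset.mem_of_mem_erase h)) x]

/-- Gagliardo product lemma, Lemma 4.3 of the paper.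
Let `n ≥ 2`. For each `i` let `G i : ℝ^{n-1} → ℝ` be measurable with
`∫ |G i|^{n-1} < ∞`, and let `F i : ℝⁿ → ℝ` be given by
`F i x = G i (x₁,…,x_{i-1},x_{i+1},…,x_n)` (so `F i` does not depend on the `i`-th
coordinate).  Then `∫_{ℝⁿ} |F 1 ⋯ F n| ≤ ∏ i (∫_{ℝ^{n-1}} |G i|^{n-1})^{1/(n-1)}`. -/
theorem stmt1 (n : ℕ) (hn : 2 ≤ n)
    (G : Fin n → (Fin (n - 1) → ℝ) → ℝ)
    (hGmeas : ∀ i, Measurable (G i))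
    (hGfin : ∀ i, (∫⁻ y : Fin (n - 1) → ℝ, (‖G i y‖₊ : ℝ≥0∞) ^ (n - 1)) < ⊤) :
    (∫⁻ x : Fin n → ℝ, ∏ i : Fin n,
        (‖G i (fun j => x (Fin.cast (by omega : n - 1 + 1 = n)
          ((Fin.cast (by omega : n = n - 1 + 1) i).succAbove j)))‖₊ : ℝ≥0∞)) ≤
      ∏ i : Fin n,
        (∫⁻ y : Fin (n - 1) → ℝ, (‖G i y‖₊ : ℝ≥0∞) ^ (n - 1)) ^ ((1 : ℝ) / ((n : ℝ) - 1)) := by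
  classical
  have h1n : 1 ≤ n := by omega
  have hcast : ((n - 1 : ℕ) : ℝ) = (n : ℝ) - 1 := by
    rw [Nat.cast_sub h1n, Nat.cast_one]
  have hnpos : (0 : ℝ) < (n : ℝ) - 1 := by
    have : (2 : ℝ) ≤ n := by exact_mod_cast hn
    linarith
  set p : ℝ := (1 : ℝ) / ((n : ℝ) - 1) with hp
  have hp₀ : 0 ≤ p := by positivity
  have hp1 : ((n : ℝ) - 1) * p = 1 := by
    rw [hp]; field_simp
  set e : Fin n → Fin (n - 1) → Fin n := fun i j =>
    Fin.cast (by omega : n - 1 + 1 = n) ((Fin.cast (by omega : n = n - 1 + 1) i).succAbove j)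
    with he
  have hfe : ∀ i j, e i j ≠ i := by
    intro i j h
    apply Fin.succAbove_ne (Fin.cast (by omega : n = n - 1 + 1) i) j
    apply Fin.ext
    simpa [he, Fin.ext_iff] using h
  have hecoord : ∀ i, Measurable fun x : Fin n → ℝ => (fun j => x (e i j)) :=
    fun i => measurable_pi_lambda _ fun j => measurable_pi_apply _
  set f : Fin n → (Fin n → ℝ) → ℝ≥0∞ := fun i x =>
    (‖G i (fun j => x (e i j))‖₊ : ℝ≥0∞) ^ (n - 1) with hf
  have hfm : ∀ i, Measurable (f i) := fun i =>
    (((hGmeas i).comp (hecoord i)).nnnorm.coe_nnreal_ennreal).pow_const _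
  have hind : ∀ (i : Fin n) (x : Fin n → ℝ) (t : ℝ),
      f i (Function.update x i t) = f i x := by
    intro i x t
    have hfun : (fun j => Function.update x i t (e i j)) = fun j => x (e i j) :=
      funext fun j => Function.update_of_ne (hfe i j) _ _
    simp only [hf, hfun]
  have hpow : ∀ a : ℝ≥0, ((a : ℝ≥0∞) ^ (n - 1)) ^ p = (a : ℝ≥0∞) := by
    intro a
    rw [← ENNReal.rpow_natCast (a : ℝ≥0∞) (n - 1), ← ENNReal.rpow_mul, hcast, hp,
      mul_one_div, div_self hnpos.ne', ENNReal.rpow_one]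
  set x₀ : Fin n → ℝ := fun _ => 0 with hx₀
  have key := lw_aux (fun _ : Fin n => (volume : Measure ℝ)) hp₀
    (by rw [Fintype.card_fin]; exact hp1) f hfm hind Finset.univ x₀
  have hmarg : ∀ i : Fin n, (∫⋯∫⁻_(Finset.univ.erase i), f i ∂fun _ => volume) x₀ =
      ∫⁻ y : Fin (n - 1) → ℝ, (‖G i y‖₊ : ℝ≥0∞) ^ (n - 1) := by
    intro i
    have heinj : Function.Injective (e i) := by
      intro a b hab
      exact (Fin.cast (by omega : n = n - 1 + 1) i).succAbove_right_injective
        (by apply Fin.ext; simpa [he, Fin.ext_iff] using hab)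
    have himg : (Finset.univ : Finset (Fin (n - 1))).image (e i) = Finset.univ.erase i := by
      ext k
      simp only [Finset.mem_image, Finset.mem_univ, true_and, Finset.mem_erase, and_true]
      constructor
      · rintro ⟨j, rfl⟩; exact hfe i j
      · intro hk
        obtain ⟨j, hj⟩ := Fin.exists_succAbove_eq
          (show Fin.cast (by omega : n = n - 1 + 1) k ≠ Fin.cast (by omega : n = n - 1 + 1) i by
            intro h; apply hk; apply Fin.ext; simpa [Fin.ext_iff] using h)
        exact ⟨j, by apply Fin.ext; simpa [he, Fin.ext_iff] using congrArg Fin.val hj⟩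
    have hg : Measurable fun y : Fin (n - 1) → ℝ => (‖G i y‖₊ : ℝ≥0∞) ^ (n - 1) :=
      ((hGmeas i).nnnorm.coe_nnreal_ennreal).pow_const _
    calc (∫⋯∫⁻_(Finset.univ.erase i), f i ∂fun _ => volume) x₀
        = (∫⋯∫⁻_((Finset.univ : Finset (Fin (n - 1))).image (e i)),
            (fun y : Fin (n - 1) → ℝ => (‖G i y‖₊ : ℝ≥0∞) ^ (n - 1)) ∘
              (· ∘' e i) ∂fun _ => volume) x₀ := by rw [himg]; rfl
      _ = (∫⋯∫⁻_(Finset.univ : Finset (Fin (n - 1))),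
            (fun y : Fin (n - 1) → ℝ => (‖G i y‖₊ : ℝ≥0∞) ^ (n - 1)) ∂fun _ => volume)
            (x₀ ∘' e i) :=
          lmarginal_image heinj _ hg x₀
      _ = ∫⁻ y : Fin (n - 1) → ℝ, (‖G i y‖₊ : ℝ≥0∞) ^ (n - 1) := by
          rw [lmarginal_univ]
          rw [← volume_pi]
  calc (∫⁻ x : Fin n → ℝ, ∏ i : Fin n, (‖G i (fun j => x (e i j))‖₊ : ℝ≥0∞))
      = ∫⁻ x : Fin n → ℝ, ∏ i : Fin n, f i x ^ p ∂(Measure.pi fun _ => volume) := by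
        rw [← volume_pi]
        congr 1
        funext x
        exact Finset.prod_congr rfl fun i _ => (hpow _).symm
    _ = (∫⋯∫⁻_(Finset.univ : Finset (Fin n)),
          (fun x => ∏ i : Fin n, f i x ^ p) ∂fun _ => volume) x₀ :=
        lintegral_eq_lmarginal_univ x₀
    _ ≤ ∏ i : Fin n, ((∫⋯∫⁻_(Finset.univ.erase i), f i ∂fun _ => volume) x₀) ^ p := key
    _ = ∏ i : Fin n,
          (∫⁻ y : Fin (n - 1) → ℝ, (‖G i y‖₊ : ℝ≥0∞) ^ (n - 1)) ^ ((1 : ℝ) / ((n : ℝ) - 1)) :=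
        Finset.prod_congr rfl fun i _ => by rw [hmarg i]
end

section
/- Let Ω ⊆ ℝ³ be a bounded open set, let a₁, a₂, a₃ : Ω → ℝ be continuously differentiable with bounded values and bounded first partial derivatives, and let s₀ ∈ ℝ. Set B₁ := sup_{i≠ℓ} sup_{x∈Ω} |a_i(x) ∂_i a_ℓ(x)| and B₂ := sup_{ℓ=1,2,3} sup_{x∈Ω} |aₗ(x)|. Then for all continuously differentiable u, v : Ω → ℍ with v square-integrable and the partial derivatives of u square-integrable on Ω, | ∫_Ω star( (Vu)(x) − 2s₀ (Tu)(x) ) · v(x) dx | ≤ ( 2B₁ + 2|s₀|B₂ ) · D₁(u) · ‖v‖_{L²(Ω)}. -/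
open MeasureTheory

noncomputable section

/-- `ℝ³`, modelled as `Fin 3 → ℝ`. -/
abbrev R3 := Fin 3 → ℝ

/-- Partial derivative in the `ℓ`-th coordinate direction of a quaternion-valued function. -/
def pdQ (ℓ : Fin 3) (u : R3 → Quaternion ℝ) (x : R3) : Quaternion ℝ :=
  fderiv ℝ u x (Pi.single ℓ 1)

/-- Partial derivative in the `ℓ`-th coordinate direction of a real-valued function. -/
def pdR (ℓ : Fin 3) (f : R3 → ℝ) (x : R3) : ℝ :=
  fderiv ℝ f x (Pi.single ℓ 1)

/-- The imaginary units `e₁, e₂, e₃` of the quaternions. -/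
def eQ : Fin 3 → Quaternion ℝ
  | 0 => ⟨0, 1, 0, 0⟩
  | 1 => ⟨0, 0, 1, 0⟩
  | 2 => ⟨0, 0, 0, 1⟩

/-- The vector operator `T u = Σₗ eₗ (aₗ ∂ₗ u)`. -/
def Tvec (a : Fin 3 → R3 → ℝ) (u : R3 → Quaternion ℝ) (x : R3) : Quaternion ℝ :=
  ∑ ℓ : Fin 3, eQ ℓ * (a ℓ x • pdQ ℓ u x)

/-- The first-order vector operator
`V u = e₁(a₃(∂₃a₂)∂₂u − a₂(∂₂a₃)∂₃u) + e₂(a₃(∂₃a₁)∂₁u − a₁(∂₁a₃)∂₃u)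
      + e₃(a₁(∂₁a₂)∂₂u − a₂(∂₂a₁)∂₁u)`
(indices shifted by one: `aᵢ = a (i-1)`, `eᵢ = eQ (i-1)`). -/
def Vop (a : Fin 3 → R3 → ℝ) (u : R3 → Quaternion ℝ) (x : R3) : Quaternion ℝ :=
  eQ 0 * ((a 2 x * pdR 2 (a 1) x) • pdQ 1 u x - (a 1 x * pdR 1 (a 2) x) • pdQ 2 u x)
  + eQ 1 * ((a 2 x * pdR 2 (a 0) x) • pdQ 0 u x - (a 0 x * pdR 0 (a 2) x) • pdQ 2 u x)
  + eQ 2 * ((a 0 x * pdR 0 (a 1) x) • pdQ 1 u x - (a 1 x * pdR 1 (a 0) x) • pdQ 0 u x)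

/-- The `L²(Ω)` norm `(∫_Ω |g|²)^{1/2}` of a quaternion-valued function. -/
def nL2 (Ω : Set R3) (g : R3 → Quaternion ℝ) : ℝ :=
  (∫ x in Ω, ‖g x‖ ^ 2) ^ ((1 : ℝ) / 2)

/-- `D₁(u) = Σₗ ‖∂ₗu‖_{L²(Ω)}`. -/
def D1 (Ω : Set R3) (u : R3 → Quaternion ℝ) : ℝ :=
  ∑ ℓ : Fin 3, nL2 Ω (pdQ ℓ u)

/-- The squared Dirichlet seminorm `‖u‖²_D = Σₗ ‖∂ₗu‖²_{L²(Ω)}`. -/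
def nD2 (Ω : Set R3) (u : R3 → Quaternion ℝ) : ℝ :=
  ∑ ℓ : Fin 3, ∫ x in Ω, ‖pdQ ℓ u x‖ ^ 2

/-- `M = Σ_{i,ℓ} ‖aᵢ ∂ᵢ aₗ‖_{L³(Ω)}`. -/
def Msum (Ω : Set R3) (a : Fin 3 → R3 → ℝ) : ℝ :=
  ∑ i : Fin 3, ∑ ℓ : Fin 3, (∫ x in Ω, |a i x * pdR i (a ℓ) x| ^ 3) ^ ((1 : ℝ) / 3)

/-- The real part `Re b_{js₁}(u,u)` of the quadratic form of Definition 3.2 of the paper,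
for a purely imaginary spectral parameter `s = j s₁`:
`ReB(u) = s₁²‖u‖²_{L²} + Σₗ‖aₗ∂ₗu‖²_{L²}
  + Re((1/2) Σₗ ∫_Ω star(∂ₗu) ∂ₗ(aₗ²) u + ∫_Ω star(Vu) u)`. -/
def ReB (Ω : Set R3) (a : Fin 3 → R3 → ℝ) (s₁ : ℝ) (u : R3 → Quaternion ℝ) : ℝ :=
  s₁ ^ 2 * (∫ x in Ω, ‖u x‖ ^ 2)
  + (∑ ℓ : Fin 3, ∫ x in Ω, ‖a ℓ x • pdQ ℓ u x‖ ^ 2)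
  + ((1 / 2 : ℝ) • (∑ ℓ : Fin 3,
        ∫ x in Ω, star (pdQ ℓ u x) * (pdR ℓ (fun y => a ℓ y ^ 2) x • u x))
      + ∫ x in Ω, star (Vop a u x) * u x).re

lemma norm_eQ (i : Fin 3) : ‖eQ i‖ = 1 := by
  have h : Quaternion.normSq (eQ i) = 1 := by
    rw [Quaternion.normSq_def']; fin_cases i <;> simp [eQ]
  have h2 := Quaternion.normSq_eq_norm_mul_self (eQ i)
  nlinarith [norm_nonneg (eQ i)]

lemma hterm (e : Quaternion ℝ) (he : ‖e‖ = 1) (c d : ℝ) (p q : Quaternion ℝ) :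
    ‖e * (c • p - d • q)‖ ≤ |c| * ‖p‖ + |d| * ‖q‖ := by
  rw [norm_mul, he, one_mul]
  refine (norm_sub_le _ _).trans ?_
  simp [norm_smul]

lemma int_norm_mul {α} [MeasurableSpace α] {μ : Measure α} {f g : α → Quaternion ℝ}
    (hf : MemLp f 2 μ) (hg : MemLp g 2 μ) :
    Integrable (fun x => ‖f x‖ * ‖g x‖) μ := by
  refine Integrable.mono' ((hf.norm.integrable_sq).add (hg.norm.integrable_sq))
    (hf.1.norm.mul hg.1.norm) ?_
  refine Filter.Eventually.of_forall fun x => ?_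
  have h1 := norm_nonneg (f x); have h2 := norm_nonneg (g x)
  rw [Real.norm_of_nonneg (by positivity)]; simp only [Pi.add_apply]
  nlinarith [sq_nonneg (‖f x‖ - ‖g x‖)]

lemma holder2 {α} [MeasurableSpace α] {μ : Measure α} {f g : α → Quaternion ℝ}
    (hf : MemLp f 2 μ) (hg : MemLp g 2 μ) :
    ∫ x, ‖f x‖ * ‖g x‖ ∂μ ≤
      (∫ x, ‖f x‖ ^ 2 ∂μ) ^ ((1 : ℝ) / 2) * (∫ x, ‖g x‖ ^ 2 ∂μ) ^ ((1 : ℝ) / 2) := by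
  have hpq : Real.HolderConjugate 2 2 := Real.HolderConjugate.two_two
  have h2 : ENNReal.ofReal (2 : ℝ) = 2 := by norm_num
  have H := integral_mul_norm_le_Lp_mul_Lq (μ := μ) hpq (h2 ▸ hf) (h2 ▸ hg)
  have hcast : ∀ x : ℝ, x ^ (2 : ℝ) = x ^ (2 : ℕ) := fun x => by
    rw [show ((2 : ℝ) = ((2 : ℕ) : ℝ)) by norm_num, Real.rpow_natCast]
  simp_rw [hcast] at H
  exact H

/-- estimate (EQAZ2NEW) of Proposition 4.1 of the paper.
`|∫_Ω star(Vu − 2s₀Tu) v| ≤ (2B₁ + 2|s₀|B₂) D₁(u) ‖v‖_{L²(Ω)}` where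
`B₁ = sup_{i≠ℓ} sup_Ω |aᵢ ∂ᵢaₗ|` and `B₂ = supₗ sup_Ω |aₗ|`. -/
theorem stmt7 (Ω : Set R3) (hΩo : IsOpen Ω) (hΩb : Bornology.IsBounded Ω)
    (a : Fin 3 → R3 → ℝ) (ha : ∀ ℓ, ContDiffOn ℝ 1 (a ℓ) Ω)
    (s₀ : ℝ) (B₁ B₂ : ℝ)
    (hB₁ : ∀ i ℓ : Fin 3, i ≠ ℓ → ∀ x ∈ Ω, |a i x * pdR i (a ℓ) x| ≤ B₁)
    (hB₂ : ∀ ℓ : Fin 3, ∀ x ∈ Ω, |a ℓ x| ≤ B₂)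
    (u v : R3 → Quaternion ℝ)
    (hu : ContDiffOn ℝ 1 u Ω) (hv : ContDiffOn ℝ 1 v Ω)
    (hv2 : MemLp v 2 (volume.restrict Ω))
    (hu2 : ∀ ℓ : Fin 3, MemLp (pdQ ℓ u) 2 (volume.restrict Ω)) :
    ‖∫ x in Ω, star (Vop a u x - (2 * s₀) • Tvec a u x) * v x‖ ≤
      (2 * B₁ + 2 * |s₀| * B₂) * D1 Ω u * nL2 Ω v := by
  rcases Set.eq_empty_or_nonempty Ω with hΩe | ⟨x₀, hx₀⟩
  · subst hΩe
    simp [D1, nL2, Measure.restrict_empty,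
      Real.zero_rpow (by norm_num : (1 : ℝ) / 2 ≠ 0)]
  have hB₁0 : 0 ≤ B₁ := le_trans (abs_nonneg _) (hB₁ 0 1 (by decide) x₀ hx₀)
  have hB₂0 : 0 ≤ B₂ := le_trans (abs_nonneg _) (hB₂ 0 x₀ hx₀)
  set C := 2 * B₁ + 2 * |s₀| * B₂ with hCdef
  have hC0 : 0 ≤ C := by positivity
  have hptw : ∀ x ∈ Ω, ‖Vop a u x - (2 * s₀) • Tvec a u x‖ ≤
      C * (‖pdQ 0 u x‖ + ‖pdQ 1 u x‖ + ‖pdQ 2 u x‖) := by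
    intro x hx
    have hb : ∀ i ℓ : Fin 3, i ≠ ℓ → ∀ p : Quaternion ℝ,
        |a i x * pdR i (a ℓ) x| * ‖p‖ ≤ B₁ * ‖p‖ := fun i ℓ h p =>
      mul_le_mul_of_nonneg_right (hB₁ i ℓ h x hx) (norm_nonneg _)
    have hV : ‖Vop a u x‖ ≤
        (B₁ * ‖pdQ 1 u x‖ + B₁ * ‖pdQ 2 u x‖) + (B₁ * ‖pdQ 0 u x‖ + B₁ * ‖pdQ 2 u x‖)
          + (B₁ * ‖pdQ 1 u x‖ + B₁ * ‖pdQ 0 u x‖) := by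
      refine norm_add₃_le.trans (add_le_add (add_le_add ?_ ?_) ?_) <;>
        exact (hterm _ (norm_eQ _) _ _ _ _).trans
          (add_le_add (hb _ _ (by decide) _) (hb _ _ (by decide) _))
    have hip : ∀ ℓ : Fin 3, ‖eQ ℓ * (a ℓ x • pdQ ℓ u x)‖ ≤ B₂ * ‖pdQ ℓ u x‖ := by
      intro ℓ
      rw [norm_mul, norm_eQ, one_mul, norm_smul, Real.norm_eq_abs]
      exact mul_le_mul_of_nonneg_right (hB₂ ℓ x hx) (norm_nonneg _)
    have hT : ‖Tvec a u x‖ ≤ B₂ * ‖pdQ 0 u x‖ + B₂ * ‖pdQ 1 u x‖ + B₂ * ‖pdQ 2 u x‖ := by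
      rw [Tvec, Fin.sum_univ_three]
      exact norm_add₃_le.trans (add_le_add (add_le_add (hip 0) (hip 1)) (hip 2))
    calc ‖Vop a u x - (2 * s₀) • Tvec a u x‖
        ≤ ‖Vop a u x‖ + ‖(2 * s₀) • Tvec a u x‖ := norm_sub_le _ _
      _ = ‖Vop a u x‖ + |2 * s₀| * ‖Tvec a u x‖ := by rw [norm_smul, Real.norm_eq_abs]
      _ ≤ ((B₁ * ‖pdQ 1 u x‖ + B₁ * ‖pdQ 2 u x‖) + (B₁ * ‖pdQ 0 u x‖ + B₁ * ‖pdQ 2 u x‖)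
          + (B₁ * ‖pdQ 1 u x‖ + B₁ * ‖pdQ 0 u x‖))
          + |2 * s₀| * (B₂ * ‖pdQ 0 u x‖ + B₂ * ‖pdQ 1 u x‖ + B₂ * ‖pdQ 2 u x‖) :=
        add_le_add hV (mul_le_mul_of_nonneg_left hT (abs_nonneg _))
      _ = C * (‖pdQ 0 u x‖ + ‖pdQ 1 u x‖ + ‖pdQ 2 u x‖) := by
        rw [abs_mul, abs_two, hCdef]; ring
  have hI : ∀ ℓ : Fin 3, Integrable (fun x => ‖pdQ ℓ u x‖ * ‖v x‖) (volume.restrict Ω) :=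
    fun ℓ => int_norm_mul (hu2 ℓ) hv2
  have hgint : Integrable (fun x => C * (‖pdQ 0 u x‖ * ‖v x‖) + C * (‖pdQ 1 u x‖ * ‖v x‖)
      + C * (‖pdQ 2 u x‖ * ‖v x‖)) (volume.restrict Ω) :=
    (((hI 0).const_mul C).add ((hI 1).const_mul C)).add ((hI 2).const_mul C)
  have hH : ∀ ℓ : Fin 3, ∫ x in Ω, ‖pdQ ℓ u x‖ * ‖v x‖ ≤ nL2 Ω (pdQ ℓ u) * nL2 Ω v :=
    fun ℓ => holder2 (hu2 ℓ) hv2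
  calc ‖∫ x in Ω, star (Vop a u x - (2 * s₀) • Tvec a u x) * v x‖
      ≤ ∫ x in Ω, ‖star (Vop a u x - (2 * s₀) • Tvec a u x) * v x‖ :=
        norm_integral_le_integral_norm _
    _ = ∫ x in Ω, ‖Vop a u x - (2 * s₀) • Tvec a u x‖ * ‖v x‖ := by
        simp only [norm_mul, norm_star]
    _ ≤ ∫ x in Ω, (C * (‖pdQ 0 u x‖ * ‖v x‖) + C * (‖pdQ 1 u x‖ * ‖v x‖)
          + C * (‖pdQ 2 u x‖ * ‖v x‖)) := by
        refine integral_mono_of_nonneg (Filter.Eventually.of_forall fun x => by positivity)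
          hgint (ae_restrict_of_forall_mem hΩo.measurableSet fun x hx => ?_)
        calc ‖Vop a u x - (2 * s₀) • Tvec a u x‖ * ‖v x‖
            ≤ (C * (‖pdQ 0 u x‖ + ‖pdQ 1 u x‖ + ‖pdQ 2 u x‖)) * ‖v x‖ :=
              mul_le_mul_of_nonneg_right (hptw x hx) (norm_nonneg _)
          _ = C * (‖pdQ 0 u x‖ * ‖v x‖) + C * (‖pdQ 1 u x‖ * ‖v x‖)
              + C * (‖pdQ 2 u x‖ * ‖v x‖) := by ring
    _ = C * (∫ x in Ω, ‖pdQ 0 u x‖ * ‖v x‖) + C * (∫ x in Ω, ‖pdQ 1 u x‖ * ‖v x‖)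
        + C * (∫ x in Ω, ‖pdQ 2 u x‖ * ‖v x‖) := by
        have h01 : Integrable (fun x => C * (‖pdQ 0 u x‖ * ‖v x‖) + C * (‖pdQ 1 u x‖ * ‖v x‖))
            (volume.restrict Ω) := ((hI 0).const_mul C).add ((hI 1).const_mul C)
        have h2' : Integrable (fun x => C * (‖pdQ 2 u x‖ * ‖v x‖)) (volume.restrict Ω) :=
          (hI 2).const_mul C
        have h0' : Integrable (fun x => C * (‖pdQ 0 u x‖ * ‖v x‖)) (volume.restrict Ω) :=
          (hI 0).const_mul C
        have h1' : Integrable (fun x => C * (‖pdQ 1 u x‖ * ‖v x‖)) (volume.restrict Ω) :=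
          (hI 1).const_mul C
        rw [integral_add h01 h2', integral_add h0' h1',
          integral_const_mul, integral_const_mul, integral_const_mul]
    _ ≤ C * (nL2 Ω (pdQ 0 u) * nL2 Ω v) + C * (nL2 Ω (pdQ 1 u) * nL2 Ω v)
        + C * (nL2 Ω (pdQ 2 u) * nL2 Ω v) :=
        add_le_add (add_le_add (mul_le_mul_of_nonneg_left (hH 0) hC0)
          (mul_le_mul_of_nonneg_left (hH 1) hC0)) (mul_le_mul_of_nonneg_left (hH 2) hC0)
    _ = C * D1 Ω u * nL2 Ω v := by rw [D1, Fin.sum_univ_three]; ring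
end
end
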